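/- Let (X,d) be a metric space. The following are equivalent: (a) (X,d) is complete; (b) each continuous function from (X,d) to any other metric space (Y,ρ) is TB-regular; (c) each locally Lipschitz function from (X,d) to any other metric space (Y,ρ) is TB-regular; (d) each real-valued locally Lipschitz function on (X,d) is TB-regular. -/

import Mathlib

universe u v

/-- `f` is TB-regular if it maps totally bounded sets to totally bounded sets. -/
def TBRegular {X : Type u} {Y : Type v} [MetricSpace X] [MetricSpace Y] (f : X → Y) : Prop :=
  ∀ A : Set X, TotallyBounded A → TotallyBounded (f '' A)

/-- `f` is locally Lipschitz if each point has an open ball around it on which `f` is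
Lipschitz. -/
def LocallyLip {X : Type u} {Y : Type v} [MetricSpace X] [MetricSpace Y] (f : X → Y) : Prop :=
  ∀ x : X, ∃ δ > (0 : ℝ), ∃ K : NNReal, LipschitzOnWith K f (Metric.ball x δ)

theorem complete_iff_continuous_tbRegular {X : Type u} [MetricSpace X] :
    List.TFAE
      [CompleteSpace X,
       ∀ (Y : Type v) [MetricSpace Y] (f : X → Y), Continuous f → TBRegular f,
       ∀ (Y : Type v) [MetricSpace Y] (f : X → Y), LocallyLip f → TBRegular f,
       ∀ f : X → ℝ, LocallyLip f → TBRegular f] := by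
  tfae_have 1 → 2 := by
    intro hX Y _ f hf A hA
    have hclA : TotallyBounded (closure A) := totallyBounded_closure.2 hA
    have hcomp : IsCompact (closure A) :=
      TotallyBounded.isCompact_of_isClosed hclA isClosed_closure
    have : IsCompact (f '' closure A) := hcomp.image hf
    exact this.totallyBounded.subset (Set.image_mono subset_closure)
  tfae_have 2 → 3 := by
    intro h Y _ f hf
    refine h Y f (continuous_iff_continuousAt.2 fun x => ?_)
    obtain ⟨δ, hδ, K, hK⟩ := hf x
    exact hK.continuousOn.continuousAt (Metric.ball_mem_nhds x hδ)
  tfae_have 3 → 4 := by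
    intro h f hf A hA
    have hg : LocallyLip (fun x => (ULift.up (f x) : ULift.{v} ℝ)) := by
      intro x
      obtain ⟨δ, hδ, K, hK⟩ := hf x
      refine ⟨δ, hδ, K, fun a ha b hb => ?_⟩
      simpa [edist_dist] using hK ha hb
    have := h (ULift.{v} ℝ) _ hg A hA
    have himg : f '' A = (fun y : ULift.{v} ℝ => y.down) ''
        ((fun x => (ULift.up (f x) : ULift.{v} ℝ)) '' A) := by
      ext y; simp [Set.mem_image]
    rw [himg]
    exact this.image ((Isometry.of_dist_eq (f := fun y : ULift.{v} ℝ => y.down) fun a b => rfl)).uniformContinuous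
  tfae_have 4 → 1 := by
    intro h
    by_contra hX
    -- embed in completion
    set i : X → UniformSpace.Completion X := (↑) with hi
    have hiso : Isometry i := UniformSpace.Completion.coe_isometry
    have hnc : ¬ IsComplete (Set.range i) := fun hc =>
      hX (hiso.isUniformInducing.completeSpace hc)
    have hncl : ¬ IsClosed (Set.range i) := fun hc => hnc hc.isComplete
    obtain ⟨ξ, hξ⟩ : ∃ ξ, ξ ∉ Set.range i := by
      by_contra hall
      push_neg at hall
      exact hncl (by rw [Set.eq_univ_of_forall hall]; exact isClosed_univ)
    have hdense : ξ ∈ closure (Set.range i) := by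
      rw [UniformSpace.Completion.denseRange_coe.closure_range]; trivial
    -- choose a sequence in X with i u n → ξ
    have hseq : ∀ n : ℕ, ∃ x : X, dist (i x) ξ < 1 / (n + 1) := by
      intro n
      have : (0 : ℝ) < 1 / (n + 1) := by positivity
      obtain ⟨y, ⟨x, rfl⟩, hy⟩ := Metric.mem_closure_iff.1 hdense _ this
      exact ⟨x, by rwa [dist_comm] at hy⟩
    choose u hu using hseq
    have htend : Filter.Tendsto (fun n => i (u n)) Filter.atTop (nhds ξ) := by
      rw [Metric.tendsto_atTop]
      intro ε hε
      obtain ⟨N, hN⟩ := exists_nat_gt (1 / ε)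
      refine ⟨N, fun n hn => lt_of_lt_of_le (hu n) ?_⟩
      rw [div_le_iff₀ (by positivity)]
      rw [div_lt_iff₀ hε] at hN
      have hNn : (N : ℝ) ≤ n + 1 := by exact_mod_cast Nat.le_succ_of_le hn
      nlinarith
    have hcauchy : CauchySeq u := by
      have h2 := Metric.cauchySeq_iff.1 htend.cauchySeq
      rw [Metric.cauchySeq_iff]
      intro ε hε
      obtain ⟨N, hN⟩ := h2 ε hε
      exact ⟨N, fun m hm n hn => by rw [← hiso.dist_eq]; exact hN m hm n hn⟩
    have hpos : ∀ x : X, 0 < dist (i x) ξ := by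
      intro x
      rcases eq_or_lt_of_le (dist_nonneg (x := i x) (y := ξ)) with h0 | h0
      · exact absurd ⟨x, dist_eq_zero.1 h0.symm⟩ hξ
      · exact h0
    -- the bad function
    set f : X → ℝ := fun x => 1 / dist (i x) ξ with hf
    have hlip : LocallyLip f := by
      intro x
      set r : ℝ := dist (i x) ξ / 2 with hr
      have hr0 : 0 < r := hr ▸ half_pos (hpos x)
      refine ⟨r, hr0, ⟨r⁻¹ * r⁻¹, by positivity⟩, ?_⟩
      refine lipschitzOnWith_iff_dist_le_mul.2 ?_
      intro a ha b hb
      have hda : r ≤ dist (i a) ξ := by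
        have hax : dist (i a) (i x) < r := by rw [hiso.dist_eq a x]; exact ha
        have htri := dist_triangle (i x) (i a) ξ
        rw [dist_comm (i x) (i a)] at htri
        linarith
      have hdb : r ≤ dist (i b) ξ := by
        have hbx : dist (i b) (i x) < r := by rw [hiso.dist_eq b x]; exact hb
        have htri := dist_triangle (i x) (i b) ξ
        rw [dist_comm (i x) (i b)] at htri
        linarith
      have ha0 : (0 : ℝ) < dist (i a) ξ := hpos a
      have hb0 : (0 : ℝ) < dist (i b) ξ := hpos b
      have key : dist (f a) (f b) =
          |dist (i b) ξ - dist (i a) ξ| / (dist (i a) ξ * dist (i b) ξ) := by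
        rw [Real.dist_eq, hf]
        rw [div_sub_div _ _ ha0.ne' hb0.ne', abs_div, one_mul, mul_one,
          abs_of_pos (mul_pos ha0 hb0)]
      rw [key]
      have hnum : |dist (i b) ξ - dist (i a) ξ| ≤ dist a b := by
        rw [← hiso.dist_eq a b]
        have h3 := abs_dist_sub_le (i b) (i a) ξ
        rwa [dist_comm (i b) (i a)] at h3
      have hden : r * r ≤ dist (i a) ξ * dist (i b) ξ :=
        mul_le_mul hda hdb hr0.le ha0.le
      have hcalc : |dist (i b) ξ - dist (i a) ξ| / (dist (i a) ξ * dist (i b) ξ)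
          ≤ dist a b / (r * r) :=
        div_le_div₀ dist_nonneg hnum (by positivity) hden
      have heq : dist a b / (r * r) = (r⁻¹ * r⁻¹) * dist a b := by
        field_simp
      calc |dist (i b) ξ - dist (i a) ξ| / (dist (i a) ξ * dist (i b) ξ)
          ≤ dist a b / (r * r) := hcalc
        _ = (r⁻¹ * r⁻¹) * dist a b := heq
        _ ≤ _ := le_of_eq rfl
    have hA : TotallyBounded (Set.range u) := hcauchy.totallyBounded_range
    have hfA : TotallyBounded (f '' Set.range u) := h f hlip _ hA
    have hbdd : Bornology.IsBounded (f '' Set.range u) := hfA.isBounded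
    obtain ⟨C, hC⟩ := hbdd.exists_norm_le
    -- but f (u n) → ∞
    have : ∀ n : ℕ, (n : ℝ) + 1 ≤ C := by
      intro n
      have h1 : f (u n) ≤ C := by
        have := hC (f (u n)) ⟨u n, Set.mem_range_self n, rfl⟩
        exact (le_abs_self _).trans (by rwa [Real.norm_eq_abs] at this)
      have h2 : (n : ℝ) + 1 ≤ f (u n) := by
        rw [hf]
        rw [le_div_iff₀ (hpos (u n))]
        have := (hu n).le
        calc ((n : ℝ) + 1) * dist (i (u n)) ξ ≤ ((n : ℝ) + 1) * (1 / (n + 1)) :=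
          mul_le_mul_of_nonneg_left this (by positivity)
          _ = 1 := by field_simp
      linarith
    obtain ⟨N, hN⟩ := exists_nat_gt C
    have := this N
    linarith
  tfae_finish
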